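/- arXiv:1309.1737 — 2 statements merged into one kernel-verified Lean document; each statement's English description precedes it below -/
import Mathlib

section
/- For linearly independent ξ_1, ξ_2 ∈ ℝ³, the kernel K(ξ_1, ξ_2) = lim_{ε_1, ε_2 → 0} (1/4π) ∫_{S²} δ_{ε_1}(ξ_1·θ) δ_{ε_2}(ξ_2·θ) dθ equals 1/(2π |ξ_1 × ξ_2|). -/
open MeasureTheory Filter Metric Set
open scoped Topology RealInnerProductSpace

noncomputable def sphereMeasure :
    Measure (sphere (0 : EuclideanSpace ℝ (Fin 3)) 1) :=
  (volume : Measure (EuclideanSpace ℝ (Fin 3))).toSphere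

/-- The cross product on `ℝ³` (Euclidean). -/
noncomputable def cross3 (a b : EuclideanSpace ℝ (Fin 3)) : EuclideanSpace ℝ (Fin 3) :=
  (EuclideanSpace.equiv (Fin 3) ℝ).symm
    (crossProduct (EuclideanSpace.equiv (Fin 3) ℝ a) (EuclideanSpace.equiv (Fin 3) ℝ b))

namespace ProjCovAux

open Matrix
open scoped Matrix

abbrev E3 := EuclideanSpace ℝ (Fin 3)

lemma inner_eq_dot (x y : E3) : ⟪x, y⟫ = (x : Fin 3 → ℝ) ⬝ᵥ (y : Fin 3 → ℝ) := by
  simp [PiLp.inner_apply, dotProduct, RCLike.inner_apply, mul_comm]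

noncomputable def w1 (ξ₁ ξ₂ : E3) : E3 :=
  (EuclideanSpace.equiv (Fin 3) ℝ).symm ((ξ₂ : Fin 3 → ℝ) ⨯₃ ((ξ₁ : Fin 3 → ℝ) ⨯₃ (ξ₂ : Fin 3 → ℝ)))

noncomputable def w2 (ξ₁ ξ₂ : E3) : E3 :=
  (EuclideanSpace.equiv (Fin 3) ℝ).symm (((ξ₁ : Fin 3 → ℝ) ⨯₃ (ξ₂ : Fin 3 → ℝ)) ⨯₃ (ξ₁ : Fin 3 → ℝ))

noncomputable def Tm (ξ₁ ξ₂ : E3) : E3 →ₗ[ℝ] E3 :=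
  Matrix.toEuclideanLin (Matrix.of
    ![(ξ₁ : Fin 3 → ℝ) ⨯₃ (ξ₂ : Fin 3 → ℝ), (ξ₁ : Fin 3 → ℝ), (ξ₂ : Fin 3 → ℝ)])

variable (ξ₁ ξ₂ : E3)

lemma ip11 : ⟪ξ₁, w1 ξ₁ ξ₂⟫ = ⟪cross3 ξ₁ ξ₂, cross3 ξ₁ ξ₂⟫ := by
  rw [inner_eq_dot, inner_eq_dot]
  show (ξ₁ : Fin 3 → ℝ) ⬝ᵥ ((ξ₂ : Fin 3 → ℝ) ⨯₃ ((ξ₁ : Fin 3 → ℝ) ⨯₃ (ξ₂ : Fin 3 → ℝ))) = _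
  rw [triple_product_permutation, triple_product_permutation]
  rfl

lemma ip21 : ⟪ξ₂, w1 ξ₁ ξ₂⟫ = 0 := by
  rw [inner_eq_dot]; exact dot_self_cross _ _

lemma ip01 : ⟪cross3 ξ₁ ξ₂, w1 ξ₁ ξ₂⟫ = 0 := by
  rw [inner_eq_dot]; exact dot_cross_self _ _

lemma ip12 : ⟪ξ₁, w2 ξ₁ ξ₂⟫ = 0 := by
  rw [inner_eq_dot]; exact dot_cross_self _ _

lemma ip22 : ⟪ξ₂, w2 ξ₁ ξ₂⟫ = ⟪cross3 ξ₁ ξ₂, cross3 ξ₁ ξ₂⟫ := by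
  rw [inner_eq_dot, inner_eq_dot]
  show (ξ₂ : Fin 3 → ℝ) ⬝ᵥ (((ξ₁ : Fin 3 → ℝ) ⨯₃ (ξ₂ : Fin 3 → ℝ)) ⨯₃ (ξ₁ : Fin 3 → ℝ)) = _
  rw [triple_product_permutation]
  rfl

lemma ip02 : ⟪cross3 ξ₁ ξ₂, w2 ξ₁ ξ₂⟫ = 0 := by
  rw [inner_eq_dot]; exact dot_self_cross _ _

lemma ip1c : ⟪ξ₁, cross3 ξ₁ ξ₂⟫ = 0 := by
  rw [inner_eq_dot]; exact dot_self_cross _ _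

lemma ip2c : ⟪ξ₂, cross3 ξ₁ ξ₂⟫ = 0 := by
  rw [inner_eq_dot]; exact dot_cross_self _ _

lemma detTm : LinearMap.det (Tm ξ₁ ξ₂) = ⟪cross3 ξ₁ ξ₂, cross3 ξ₁ ξ₂⟫ := by
  rw [Tm, Matrix.toEuclideanLin_eq_toLin, LinearMap.det_toLin]
  show Matrix.det ![(ξ₁ : Fin 3 → ℝ) ⨯₃ (ξ₂ : Fin 3 → ℝ), _, _] = _
  rw [← triple_product_eq_det, inner_eq_dot]
  rfl

lemma Tm0 (z : E3) : (Tm ξ₁ ξ₂ z : Fin 3 → ℝ) 0 = ⟪cross3 ξ₁ ξ₂, z⟫ := by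
  rw [inner_eq_dot]
  simp [Tm, Matrix.toEuclideanLin, Matrix.mulVec, dotProduct]
  rfl

lemma Tm1 (z : E3) : (Tm ξ₁ ξ₂ z : Fin 3 → ℝ) 1 = ⟪ξ₁, z⟫ := by
  rw [inner_eq_dot]
  simp [Tm, Matrix.toEuclideanLin, Matrix.mulVec, dotProduct]

lemma Tm2 (z : E3) : (Tm ξ₁ ξ₂ z : Fin 3 → ℝ) 2 = ⟪ξ₂, z⟫ := by
  rw [inner_eq_dot]
  simp [Tm, Matrix.toEuclideanLin, Matrix.mulVec, dotProduct]

lemma decom (hN : ⟪cross3 ξ₁ ξ₂, cross3 ξ₁ ξ₂⟫ ≠ 0) (x : E3) :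
    x = ⟪ξ₁, x⟫ • (⟪cross3 ξ₁ ξ₂, cross3 ξ₁ ξ₂⟫⁻¹ • w1 ξ₁ ξ₂)
      + ⟪ξ₂, x⟫ • (⟪cross3 ξ₁ ξ₂, cross3 ξ₁ ξ₂⟫⁻¹ • w2 ξ₁ ξ₂)
      + ⟪cross3 ξ₁ ξ₂, x⟫ • (⟪cross3 ξ₁ ξ₂, cross3 ξ₁ ξ₂⟫⁻¹ • cross3 ξ₁ ξ₂) := by
  set N := ⟪cross3 ξ₁ ξ₂, cross3 ξ₁ ξ₂⟫ with hNdef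
  have hdet0 : LinearMap.det (Tm ξ₁ ξ₂) ≠ 0 := by rw [detTm]; exact hN
  have hTinj : Function.Injective (Tm ξ₁ ξ₂) := (LinearMap.equivOfDetNeZero _ hdet0).injective
  apply hTinj
  set y := ⟪ξ₁, x⟫ • (N⁻¹ • w1 ξ₁ ξ₂) + ⟪ξ₂, x⟫ • (N⁻¹ • w2 ξ₁ ξ₂)
    + ⟪cross3 ξ₁ ξ₂, x⟫ • (N⁻¹ • cross3 ξ₁ ξ₂) with hydef
  have e0 : (Tm ξ₁ ξ₂ x : Fin 3 → ℝ) 0 = (Tm ξ₁ ξ₂ y : Fin 3 → ℝ) 0 := by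
    rw [Tm0, Tm0, hydef, inner_add_right, inner_add_right, real_inner_smul_right,
      real_inner_smul_right, real_inner_smul_right, real_inner_smul_right,
      real_inner_smul_right, real_inner_smul_right, ip01, ip02, ← hNdef]
    field_simp
    ring
  have e1 : (Tm ξ₁ ξ₂ x : Fin 3 → ℝ) 1 = (Tm ξ₁ ξ₂ y : Fin 3 → ℝ) 1 := by
    rw [Tm1, Tm1, hydef, inner_add_right, inner_add_right, real_inner_smul_right,
      real_inner_smul_right, real_inner_smul_right, real_inner_smul_right,
      real_inner_smul_right, real_inner_smul_right, ip11, ip12, ip1c, ← hNdef]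
    field_simp
    ring
  have e2 : (Tm ξ₁ ξ₂ x : Fin 3 → ℝ) 2 = (Tm ξ₁ ξ₂ y : Fin 3 → ℝ) 2 := by
    rw [Tm2, Tm2, hydef, inner_add_right, inner_add_right, real_inner_smul_right,
      real_inner_smul_right, real_inner_smul_right, real_inner_smul_right,
      real_inner_smul_right, real_inner_smul_right, ip21, ip22, ip2c, ← hNdef]
    field_simp
    ring
  apply (EuclideanSpace.equiv (Fin 3) ℝ).injective
  funext i
  fin_cases i
  · exact e0
  · exact e1
  · exact e2

/-- splitting `ℝ³` into first coordinate and the rest. -/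
noncomputable def splitMap : E3 → ℝ × (Fin 2 → ℝ) :=
  (MeasurableEquiv.piFinSuccAbove (fun _ => ℝ) 0) ∘ (MeasurableEquiv.toLp 2 (Fin 3 → ℝ)).symm

lemma splitMap_apply (x : E3) :
    splitMap x = ((x : Fin 3 → ℝ) 0, ![(x : Fin 3 → ℝ) 1, (x : Fin 3 → ℝ) 2]) := by
  unfold splitMap
  refine Prod.ext ?_ ?_
  · rfl
  · funext j
    fin_cases j <;> rfl

lemma splitMap_mp :
    MeasurePreserving splitMap (volume : Measure E3)
      ((volume : Measure ℝ).prod (volume : Measure (Fin 2 → ℝ))) := by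
  unfold splitMap
  refine MeasurePreserving.comp ?_ (EuclideanSpace.volume_preserving_symm_measurableEquiv_toLp (Fin 3))
  have := measurePreserving_piFinSuccAbove (fun _ : Fin 3 => (volume : Measure ℝ)) 0
  simpa [MeasureTheory.volume_pi] using this

lemma rect_vol (a b : ℝ) (ha : 0 ≤ a) (hb : 0 ≤ b) :
    (volume : Measure (Fin 2 → ℝ)) {q | |q 0| ≤ a ∧ |q 1| ≤ b}
      = ENNReal.ofReal ((2 * a) * (2 * b)) := by
  have : {q : Fin 2 → ℝ | |q 0| ≤ a ∧ |q 1| ≤ b}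
      = Set.univ.pi ![Icc (-a) a, Icc (-b) b] := by
    ext q
    simp [Fin.forall_fin_two, abs_le, and_assoc]
  rw [this, volume_pi_pi]
  simp only [Fin.prod_univ_two, Matrix.cons_val_zero, Matrix.cons_val_one, Matrix.head_cons,
    Real.volume_Icc]
  rw [← ENNReal.ofReal_mul (by linarith)]
  congr 1; ring

lemma slab_meas (L : ℝ) (a b : ℝ → ℝ) (hac : Continuous a) (hbc : Continuous b) :
    MeasurableSet {y : ℝ × (Fin 2 → ℝ) | |y.1| ≤ L ∧ |y.2 0| ≤ a y.1 ∧ |y.2 1| ≤ b y.1} := by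
  have m0 : Measurable fun y : ℝ × (Fin 2 → ℝ) => |y.1| := measurable_fst.abs
  have m1 : Measurable fun y : ℝ × (Fin 2 → ℝ) => y.2 0 :=
    (measurable_pi_apply 0).comp measurable_snd
  have m2 : Measurable fun y : ℝ × (Fin 2 → ℝ) => y.2 1 :=
    (measurable_pi_apply 1).comp measurable_snd
  exact (measurableSet_le m0 measurable_const).inter
    (((measurableSet_le m1.abs (hac.measurable.comp measurable_fst))).inter
     ((measurableSet_le m2.abs (hbc.measurable.comp measurable_fst))))

lemma slab_vol (L : ℝ) (a b : ℝ → ℝ) (hac : Continuous a) (hbc : Continuous b)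
    (han : ∀ t, 0 ≤ a t) (hbn : ∀ t, 0 ≤ b t) :
    ((volume : Measure ℝ).prod (volume : Measure (Fin 2 → ℝ)))
      {y : ℝ × (Fin 2 → ℝ) | |y.1| ≤ L ∧ |y.2 0| ≤ a y.1 ∧ |y.2 1| ≤ b y.1}
      = ENNReal.ofReal (∫ t in Icc (-L) L, (2 * a t) * (2 * b t)) := by
  have hs := slab_meas L a b hac hbc
  rw [Measure.prod_apply hs]
  have hslice : ∀ t : ℝ, (volume : Measure (Fin 2 → ℝ))
      (Prod.mk t ⁻¹' {y : ℝ × (Fin 2 → ℝ) | |y.1| ≤ L ∧ |y.2 0| ≤ a y.1 ∧ |y.2 1| ≤ b y.1})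
      = (Icc (-L) L).indicator (fun t => ENNReal.ofReal ((2 * a t) * (2 * b t))) t := by
    intro t
    by_cases ht : |t| ≤ L
    · have : Prod.mk t ⁻¹' {y : ℝ × (Fin 2 → ℝ) | |y.1| ≤ L ∧ |y.2 0| ≤ a y.1 ∧ |y.2 1| ≤ b y.1}
          = {q | |q 0| ≤ a t ∧ |q 1| ≤ b t} := by
        ext q; simp [ht]
      rw [this, rect_vol _ _ (han t) (hbn t),
        indicator_of_mem (by simpa [abs_le, mem_Icc] using ht)]
    · have : Prod.mk t ⁻¹' {y : ℝ × (Fin 2 → ℝ) | |y.1| ≤ L ∧ |y.2 0| ≤ a y.1 ∧ |y.2 1| ≤ b y.1}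
          = ∅ := by
        ext q; simp [ht]
      rw [this, indicator_of_notMem (by simpa [abs_le, mem_Icc] using ht)]
      simp
  simp_rw [hslice]
  rw [lintegral_indicator measurableSet_Icc]
  rw [← ofReal_integral_eq_lintegral_ofReal]
  · exact (Continuous.integrableOn_Icc (by fun_prop))
  · filter_upwards with t
    exact mul_nonneg (by linarith [han t]) (by linarith [hbn t])

lemma poly_int (c₁ c₂ L : ℝ) (hL : 0 ≤ L) :
    ∫ t in Icc (-L) L, (c₁ * t ^ 2 + c₂) = c₁ * (2 * L ^ 3 / 3) + c₂ * (2 * L) := by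
  rw [MeasureTheory.integral_Icc_eq_integral_Ioc,
    ← intervalIntegral.integral_of_le (by linarith : -L ≤ L)]
  rw [intervalIntegral.integral_add (f := fun t : ℝ => c₁ * t ^ 2) (g := fun _ => c₂)
    (((continuous_const.mul (continuous_pow 2) : Continuous fun t : ℝ => c₁ * t ^ 2).intervalIntegrable _ _))
    (intervalIntegrable_const)]
  rw [intervalIntegral.integral_const_mul, integral_pow, intervalIntegral.integral_const]
  norm_num
  ring

end ProjCovAux

open ProjCovAux
open scoped Pointwise Matrix

set_option maxHeartbeats 2000000 in
/-- For linearly independent `ξ₁, ξ₂ ∈ ℝ³`, the kernel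
`K(ξ₁,ξ₂) = lim_{ε₁,ε₂→0⁺} (1/4π) ∫_{S²} δ_{ε₁}(ξ₁·θ) δ_{ε₂}(ξ₂·θ) dθ`
equals `1/(2π |ξ₁ × ξ₂|)`. -/
theorem projection_covariance_kernel
    (ξ₁ ξ₂ : EuclideanSpace ℝ (Fin 3)) (h : LinearIndependent ℝ ![ξ₁, ξ₂]) :
    Tendsto (fun ε : ℝ × ℝ =>
        (4 * Real.pi)⁻¹ *
          ∫ θ : sphere (0 : EuclideanSpace ℝ (Fin 3)) 1,
            ((2 * ε.1)⁻¹ *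
                Set.indicator (Set.Icc (-ε.1) ε.1) (fun _ => (1 : ℝ))
                  ⟪ξ₁, (θ : EuclideanSpace ℝ (Fin 3))⟫) *
            ((2 * ε.2)⁻¹ *
                Set.indicator (Set.Icc (-ε.2) ε.2) (fun _ => (1 : ℝ))
                  ⟪ξ₂, (θ : EuclideanSpace ℝ (Fin 3))⟫) ∂sphereMeasure)
      ((𝓝[>] (0 : ℝ)) ×ˢ (𝓝[>] (0 : ℝ)))
      (𝓝 (1 / (2 * Real.pi * ‖cross3 ξ₁ ξ₂‖))) := by
  classical
  have hπ : (0 : ℝ) < Real.pi := Real.pi_pos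
  -- basic nondegeneracy
  have hfg : LinearIndependent ℝ ![(ξ₁ : Fin 3 → ℝ), (ξ₂ : Fin 3 → ℝ)] := by
    have := h.map' (WithLp.linearEquiv 2 ℝ (Fin 3 → ℝ)).toLinearMap (LinearEquiv.ker _)
    have e : ![(ξ₁ : Fin 3 → ℝ), (ξ₂ : Fin 3 → ℝ)]
        = (WithLp.linearEquiv 2 ℝ (Fin 3 → ℝ)).toLinearMap ∘ ![ξ₁, ξ₂] := by
      funext i
      fin_cases i <;> rfl
    rw [e]
    exact this
  have hc'ne : (ξ₁ : Fin 3 → ℝ) ⨯₃ (ξ₂ : Fin 3 → ℝ) ≠ 0 :=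
    crossProduct_ne_zero_iff_linearIndependent.2 hfg
  have hcne : cross3 ξ₁ ξ₂ ≠ 0 := by
    intro h0
    apply hc'ne
    rw [show ((ξ₁ : Fin 3 → ℝ) ⨯₃ (ξ₂ : Fin 3 → ℝ))
        = (EuclideanSpace.equiv (Fin 3) ℝ) (cross3 ξ₁ ξ₂) from rfl, h0, map_zero]
  set nc : ℝ := ‖cross3 ξ₁ ξ₂‖ with hnc_def
  have hnc : 0 < nc := norm_pos_iff.2 hcne
  have hNin : ⟪cross3 ξ₁ ξ₂, cross3 ξ₁ ξ₂⟫ = nc ^ 2 := real_inner_self_eq_norm_sq _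
  have hN : (0 : ℝ) < nc ^ 2 := by positivity
  have hNne : ⟪cross3 ξ₁ ξ₂, cross3 ξ₁ ξ₂⟫ ≠ 0 := by rw [hNin]; exact hN.ne'
  set n1 : ℝ := ‖w1 ξ₁ ξ₂‖ with hn1_def
  set n2 : ℝ := ‖w2 ξ₁ ξ₂‖ with hn2_def
  have hw1ne : w1 ξ₁ ξ₂ ≠ 0 := by
    intro h0
    apply hNne
    have := ip11 ξ₁ ξ₂
    rw [h0, inner_zero_right] at this
    exact this.symm
  have hw2ne : w2 ξ₁ ξ₂ ≠ 0 := by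
    intro h0
    apply hNne
    have := ip22 ξ₁ ξ₂
    rw [h0, inner_zero_right] at this
    exact this.symm
  have hn1 : 0 < n1 := norm_pos_iff.2 hw1ne
  have hn2 : 0 < n2 := norm_pos_iff.2 hw2ne
  -- the norm bound
  have nb : ∀ x : EuclideanSpace ℝ (Fin 3),
      ‖x‖ ≤ (nc ^ 2)⁻¹ * n1 * |⟪ξ₁, x⟫| + (nc ^ 2)⁻¹ * n2 * |⟪ξ₂, x⟫|
        + |⟪cross3 ξ₁ ξ₂, x⟫| / nc := by
    intro x
    have hd := decom ξ₁ ξ₂ hNne x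
    rw [hNin] at hd
    have step1 : ‖x‖ ≤ ‖⟪ξ₁, x⟫ • ((nc ^ 2)⁻¹ • w1 ξ₁ ξ₂)‖
        + ‖⟪ξ₂, x⟫ • ((nc ^ 2)⁻¹ • w2 ξ₁ ξ₂)‖
        + ‖⟪cross3 ξ₁ ξ₂, x⟫ • ((nc ^ 2)⁻¹ • cross3 ξ₁ ξ₂)‖ := by
      calc ‖x‖ = ‖⟪ξ₁, x⟫ • ((nc ^ 2)⁻¹ • w1 ξ₁ ξ₂) + ⟪ξ₂, x⟫ • ((nc ^ 2)⁻¹ • w2 ξ₁ ξ₂)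
          + ⟪cross3 ξ₁ ξ₂, x⟫ • ((nc ^ 2)⁻¹ • cross3 ξ₁ ξ₂)‖ := by rw [← hd]
        _ ≤ _ := by
          refine (norm_add_le _ _).trans ?_
          have := norm_add_le (⟪ξ₁, x⟫ • ((nc ^ 2)⁻¹ • w1 ξ₁ ξ₂))
            (⟪ξ₂, x⟫ • ((nc ^ 2)⁻¹ • w2 ξ₁ ξ₂))
          linarith
    have e1 : ‖⟪ξ₁, x⟫ • ((nc ^ 2)⁻¹ • w1 ξ₁ ξ₂)‖ = (nc ^ 2)⁻¹ * n1 * |⟪ξ₁, x⟫| := by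
      rw [norm_smul, norm_smul]
      simp only [Real.norm_eq_abs, abs_of_pos (inv_pos.2 hN), ← hn1_def]
      ring
    have e2 : ‖⟪ξ₂, x⟫ • ((nc ^ 2)⁻¹ • w2 ξ₁ ξ₂)‖ = (nc ^ 2)⁻¹ * n2 * |⟪ξ₂, x⟫| := by
      rw [norm_smul, norm_smul]
      simp only [Real.norm_eq_abs, abs_of_pos (inv_pos.2 hN), ← hn2_def]
      ring
    have e3 : ‖⟪cross3 ξ₁ ξ₂, x⟫ • ((nc ^ 2)⁻¹ • cross3 ξ₁ ξ₂)‖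
        = |⟪cross3 ξ₁ ξ₂, x⟫| / nc := by
      rw [norm_smul, norm_smul]
      simp only [Real.norm_eq_abs, abs_of_pos (inv_pos.2 hN), ← hnc_def]
      rw [sq]
      field_simp
    rw [e1, e2, e3] at step1
    exact step1
  have csb : ∀ x : EuclideanSpace ℝ (Fin 3), |⟪cross3 ξ₁ ξ₂, x⟫| ≤ nc * ‖x‖ := by
    intro x
    have := abs_real_inner_le_norm (cross3 ξ₁ ξ₂) x
    rwa [← hnc_def] at this
  -- rho
  set ρ : ℝ × ℝ → ℝ := fun ε => (ε.1 * n1 + ε.2 * n2) / nc ^ 2 with hρ_def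
  set gl : ℝ × ℝ → ℝ := fun ε => (4 * Real.pi)⁻¹ * (2 / (nc * (1 + ρ ε) ^ 6)) with hgl_def
  set gu : ℝ × ℝ → ℝ :=
    fun ε => (4 * Real.pi)⁻¹ * (2 / nc + 6 * (2 * ρ ε + ρ ε ^ 2) / nc) with hgu_def
  -- limits of ρ, gl, gu
  have hρ0 : Tendsto ρ ((𝓝[>] (0 : ℝ)) ×ˢ (𝓝[>] (0 : ℝ))) (𝓝 0) := by
    have h1 : Tendsto (fun ε : ℝ × ℝ => ε.1) ((𝓝[>] (0 : ℝ)) ×ˢ (𝓝[>] (0 : ℝ))) (𝓝 0) :=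
      tendsto_fst.mono_right nhdsWithin_le_nhds
    have h2 : Tendsto (fun ε : ℝ × ℝ => ε.2) ((𝓝[>] (0 : ℝ)) ×ˢ (𝓝[>] (0 : ℝ))) (𝓝 0) :=
      tendsto_snd.mono_right nhdsWithin_le_nhds
    have := ((h1.mul_const n1).add (h2.mul_const n2)).div_const (nc ^ 2)
    simpa [hρ_def] using this
  have key_lim : ∀ G : ℝ → ℝ, ContinuousAt G 0 → G 0 = 1 / (2 * Real.pi * nc) →
      Tendsto (fun ε => G (ρ ε)) ((𝓝[>] (0 : ℝ)) ×ˢ (𝓝[>] (0 : ℝ)))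
        (𝓝 (1 / (2 * Real.pi * nc))) := by
    intro G hG hG0
    have := hG.tendsto.comp hρ0
    rwa [hG0] at this
  have hgl0 : Tendsto gl ((𝓝[>] (0 : ℝ)) ×ˢ (𝓝[>] (0 : ℝ)))
      (𝓝 (1 / (2 * Real.pi * nc))) := by
    refine key_lim (fun t => (4 * Real.pi)⁻¹ * (2 / (nc * (1 + t) ^ 6))) ?_ ?_
    · refine ContinuousAt.mul continuousAt_const ?_
      refine ContinuousAt.div continuousAt_const (by fun_prop) ?_
      norm_num [hnc.ne']
    · norm_num
      field_simp
      ring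
  have hgu0 : Tendsto gu ((𝓝[>] (0 : ℝ)) ×ˢ (𝓝[>] (0 : ℝ)))
      (𝓝 (1 / (2 * Real.pi * nc))) := by
    refine key_lim (fun t => (4 * Real.pi)⁻¹ * (2 / nc + 6 * (2 * t + t ^ 2) / nc)) ?_ ?_
    · fun_prop
    · norm_num
      field_simp
      ring
  -- the key two-sided bound
  have key : ∀ ε : ℝ × ℝ, 0 < ε.1 → 0 < ε.2 →
      gl ε ≤ (4 * Real.pi)⁻¹ *
          ∫ θ : sphere (0 : EuclideanSpace ℝ (Fin 3)) 1,
            ((2 * ε.1)⁻¹ *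
                Set.indicator (Set.Icc (-ε.1) ε.1) (fun _ => (1 : ℝ))
                  ⟪ξ₁, (θ : EuclideanSpace ℝ (Fin 3))⟫) *
            ((2 * ε.2)⁻¹ *
                Set.indicator (Set.Icc (-ε.2) ε.2) (fun _ => (1 : ℝ))
                  ⟪ξ₂, (θ : EuclideanSpace ℝ (Fin 3))⟫) ∂sphereMeasure ∧
      (4 * Real.pi)⁻¹ *
          ∫ θ : sphere (0 : EuclideanSpace ℝ (Fin 3)) 1,
            ((2 * ε.1)⁻¹ *
                Set.indicator (Set.Icc (-ε.1) ε.1) (fun _ => (1 : ℝ))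
                  ⟪ξ₁, (θ : EuclideanSpace ℝ (Fin 3))⟫) *
            ((2 * ε.2)⁻¹ *
                Set.indicator (Set.Icc (-ε.2) ε.2) (fun _ => (1 : ℝ))
                  ⟪ξ₂, (θ : EuclideanSpace ℝ (Fin 3))⟫) ∂sphereMeasure ≤ gu ε := by
    rintro ⟨ε₁, ε₂⟩ hε₁ hε₂
    simp only at hε₁ hε₂ ⊢
    have hdet0 : LinearMap.det (Tm ξ₁ ξ₂) ≠ 0 := by rw [detTm ξ₁ ξ₂]; exact hNne
    set r : ℝ := ρ (ε₁, ε₂) with hr_def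
    have hr_eq : r = (ε₁ * n1 + ε₂ * n2) / nc ^ 2 := rfl
    have hrpos : 0 < r := by
      rw [hr_eq]
      apply div_pos (by nlinarith) hN
    have h1r : (0:ℝ) < 1 + r := by linarith
    -- Step 1 : the integral as a measure
    set A := {θ : sphere (0 : EuclideanSpace ℝ (Fin 3)) 1 |
      |⟪ξ₁, (θ : EuclideanSpace ℝ (Fin 3))⟫| ≤ ε₁ ∧
      |⟪ξ₂, (θ : EuclideanSpace ℝ (Fin 3))⟫| ≤ ε₂} with hA_def
    have hc1 : Continuous fun θ : sphere (0 : EuclideanSpace ℝ (Fin 3)) 1 =>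
        ⟪ξ₁, (θ : EuclideanSpace ℝ (Fin 3))⟫ :=
      continuous_const.inner continuous_subtype_val
    have hc2 : Continuous fun θ : sphere (0 : EuclideanSpace ℝ (Fin 3)) 1 =>
        ⟪ξ₂, (θ : EuclideanSpace ℝ (Fin 3))⟫ :=
      continuous_const.inner continuous_subtype_val
    have hAm : MeasurableSet A :=
      (measurableSet_le hc1.abs.measurable measurable_const).inter
        (measurableSet_le hc2.abs.measurable measurable_const)
    have hpt : ∀ θ : sphere (0 : EuclideanSpace ℝ (Fin 3)) 1,
        ((2 * ε₁)⁻¹ * Set.indicator (Set.Icc (-ε₁) ε₁) (fun _ => (1 : ℝ))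
            ⟪ξ₁, (θ : EuclideanSpace ℝ (Fin 3))⟫) *
        ((2 * ε₂)⁻¹ * Set.indicator (Set.Icc (-ε₂) ε₂) (fun _ => (1 : ℝ))
            ⟪ξ₂, (θ : EuclideanSpace ℝ (Fin 3))⟫)
        = ((2 * ε₁)⁻¹ * (2 * ε₂)⁻¹) * A.indicator 1 θ := by
      intro θ
      simp only [Set.indicator_apply, Pi.one_apply, hA_def, Set.mem_setOf_eq, Set.mem_Icc,
        ← abs_le]
      by_cases m1 : |⟪ξ₁, (θ : EuclideanSpace ℝ (Fin 3))⟫| ≤ ε₁ <;>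
        by_cases m2 : |⟪ξ₂, (θ : EuclideanSpace ℝ (Fin 3))⟫| ≤ ε₂ <;>
        simp only [m1, m2, if_true, if_false, and_self, true_and, and_true, false_and,
          and_false, not_false_iff, mul_one, mul_zero, zero_mul, if_neg]
    have hint : (∫ θ : sphere (0 : EuclideanSpace ℝ (Fin 3)) 1,
        ((2 * ε₁)⁻¹ * Set.indicator (Set.Icc (-ε₁) ε₁) (fun _ => (1 : ℝ))
            ⟪ξ₁, (θ : EuclideanSpace ℝ (Fin 3))⟫) *
        ((2 * ε₂)⁻¹ * Set.indicator (Set.Icc (-ε₂) ε₂) (fun _ => (1 : ℝ))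
            ⟪ξ₂, (θ : EuclideanSpace ℝ (Fin 3))⟫) ∂sphereMeasure)
        = (2 * ε₁)⁻¹ * (2 * ε₂)⁻¹ * (sphereMeasure A).toReal := by
      calc _ = ∫ θ, ((2 * ε₁)⁻¹ * (2 * ε₂)⁻¹) * A.indicator 1 θ ∂sphereMeasure := by
              simp_rw [hpt]
        _ = ((2 * ε₁)⁻¹ * (2 * ε₂)⁻¹) * ∫ θ, A.indicator 1 θ ∂sphereMeasure :=
              integral_const_mul _ _
        _ = _ := by rw [integral_indicator_one hAm]; rfl
    -- Step 2 : the cone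
    set S := {x : EuclideanSpace ℝ (Fin 3) | ‖x‖ ∈ Ioo (0:ℝ) 1 ∧
      |⟪ξ₁, x⟫| ≤ ε₁ * ‖x‖ ∧ |⟪ξ₂, x⟫| ≤ ε₂ * ‖x‖} with hS_def
    have hσ : sphereMeasure A = 3 * volume S := by
      unfold sphereMeasure
      rw [Measure.toSphere_apply' _ hAm]
      have hdim : Module.finrank ℝ (EuclideanSpace ℝ (Fin 3)) = 3 := finrank_euclideanSpace_fin
      rw [hdim]
      have hset : Ioo (0:ℝ) 1 • (Subtype.val '' A) = S := by
        ext x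
        simp only [Set.mem_smul, Set.mem_image, Set.mem_setOf_eq, hA_def, hS_def]
        constructor
        · rintro ⟨t, ht, y, ⟨θ, hθ, rfl⟩, rfl⟩
          have hθn : ‖(θ : EuclideanSpace ℝ (Fin 3))‖ = 1 := by
            have := θ.2
            rwa [mem_sphere_zero_iff_norm] at this
          have htpos : 0 < t := ht.1
          refine ⟨?_, ?_, ?_⟩
          · simp [norm_smul, hθn, abs_of_pos htpos, ht.1, ht.2]
          · rw [real_inner_smul_right, norm_smul, hθn]
            simp only [abs_mul, Real.norm_eq_abs, mul_one]
            rw [abs_of_pos htpos, mul_comm ε₁ t]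
            exact mul_le_mul_of_nonneg_left hθ.1 htpos.le
          · rw [real_inner_smul_right, norm_smul, hθn]
            simp only [abs_mul, Real.norm_eq_abs, mul_one]
            rw [abs_of_pos htpos, mul_comm ε₂ t]
            exact mul_le_mul_of_nonneg_left hθ.2 htpos.le
        · rintro ⟨⟨hx0, hx1⟩, hb1, hb2⟩
          have hxne : ‖x‖ ≠ 0 := ne_of_gt hx0
          refine ⟨‖x‖, ⟨hx0, hx1⟩, ‖x‖⁻¹ • x, ⟨⟨‖x‖⁻¹ • x, ?_⟩, ?_, ?_⟩, ?_⟩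
          · rw [mem_sphere_zero_iff_norm, norm_smul]
            simp [abs_of_nonneg (inv_nonneg.2 (norm_nonneg x)), inv_mul_cancel₀ hxne]
          · constructor
            · rw [real_inner_smul_right, abs_mul, abs_of_nonneg (inv_nonneg.2 (norm_nonneg x)),
                inv_mul_le_iff₀ hx0, mul_comm]
              exact hb1
            · rw [real_inner_smul_right, abs_mul, abs_of_nonneg (inv_nonneg.2 (norm_nonneg x)),
                inv_mul_le_iff₀ hx0, mul_comm]
              exact hb2
          · rfl
          · exact smul_inv_smul₀ hxne x
      rw [hset]
      norm_num
    -- Step 3 : the comparison bodies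
    set Lp : ℝ := nc / (1 + r) ^ 2 with hLp_def
    have hLppos : 0 < Lp := div_pos hnc (by positivity)
    set aU : ℝ → ℝ := fun t => ε₁ * (|t| / nc + r) with haU_def
    set bU : ℝ → ℝ := fun t => ε₂ * (|t| / nc + r) with hbU_def
    set aL : ℝ → ℝ := fun t => ε₁ * (|t| / nc) with haL_def
    set bL : ℝ → ℝ := fun t => ε₂ * (|t| / nc) with hbL_def
    have hcaU : Continuous aU := by
      exact continuous_const.mul ((continuous_abs.div_const nc).add continuous_const)
    have hcbU : Continuous bU := by
      exact continuous_const.mul ((continuous_abs.div_const nc).add continuous_const)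
    have hcaL : Continuous aL := continuous_const.mul (continuous_abs.div_const nc)
    have hcbL : Continuous bL := continuous_const.mul (continuous_abs.div_const nc)
    have haUn : ∀ t, 0 ≤ aU t := fun t => by
      rw [haU_def]; positivity
    have hbUn : ∀ t, 0 ≤ bU t := fun t => by
      rw [hbU_def]; positivity
    have haLn : ∀ t, 0 ≤ aL t := fun t => by
      rw [haL_def]; positivity
    have hbLn : ∀ t, 0 ≤ bL t := fun t => by
      rw [hbL_def]; positivity
    set BU := {y : ℝ × (Fin 2 → ℝ) | |y.1| ≤ nc ∧ |y.2 0| ≤ aU y.1 ∧ |y.2 1| ≤ bU y.1}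
      with hBU_def
    set BL := {y : ℝ × (Fin 2 → ℝ) | |y.1| ≤ Lp ∧ |y.2 0| ≤ aL y.1 ∧ |y.2 1| ≤ bL y.1}
      with hBL_def
    -- the inclusions
    have incl_up : S ⊆ (fun x => splitMap (Tm ξ₁ ξ₂ x)) ⁻¹' BU := by
      rintro x ⟨⟨hx0, hx1⟩, hb1, hb2⟩
      have hxle1 : ‖x‖ ≤ 1 := hx1.le
      simp only [Set.mem_preimage, splitMap_apply, hBU_def, Set.mem_setOf_eq,
        Matrix.cons_val_zero, Matrix.cons_val_one, Matrix.head_cons]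
      rw [Tm0, Tm1, Tm2]
      have hcx : |⟪cross3 ξ₁ ξ₂, x⟫| ≤ nc := by
        have := csb x
        nlinarith
      have hnx_bound : ‖x‖ ≤ |⟪cross3 ξ₁ ξ₂, x⟫| / nc + r := by
        have hnb := nb x
        have k1 : (nc ^ 2)⁻¹ * n1 * |⟪ξ₁, x⟫| ≤ (nc ^ 2)⁻¹ * n1 * ε₁ := by
          apply mul_le_mul_of_nonneg_left _ (by positivity)
          nlinarith
        have k2 : (nc ^ 2)⁻¹ * n2 * |⟪ξ₂, x⟫| ≤ (nc ^ 2)⁻¹ * n2 * ε₂ := by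
          apply mul_le_mul_of_nonneg_left _ (by positivity)
          nlinarith
        have k3 : (nc ^ 2)⁻¹ * n1 * ε₁ + (nc ^ 2)⁻¹ * n2 * ε₂ = r := by
          rw [hr_eq]; field_simp
        linarith
      refine ⟨hcx, ?_, ?_⟩
      · rw [haU_def]
        calc |⟪ξ₁, x⟫| ≤ ε₁ * ‖x‖ := hb1
          _ ≤ ε₁ * (|⟪cross3 ξ₁ ξ₂, x⟫| / nc + r) :=
            mul_le_mul_of_nonneg_left hnx_bound hε₁.le
      · rw [hbU_def]
        calc |⟪ξ₂, x⟫| ≤ ε₂ * ‖x‖ := hb2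
          _ ≤ ε₂ * (|⟪cross3 ξ₁ ξ₂, x⟫| / nc + r) :=
            mul_le_mul_of_nonneg_left hnx_bound hε₂.le
    have incl_lo : (fun x => splitMap (Tm ξ₁ ξ₂ x)) ⁻¹' BL ⊆ S ∪ {0} := by
      intro x hx
      simp only [Set.mem_preimage, splitMap_apply, hBL_def, Set.mem_setOf_eq,
        Matrix.cons_val_zero, Matrix.cons_val_one, Matrix.head_cons] at hx
      rw [Tm0, Tm1, Tm2] at hx
      obtain ⟨h0, h1, h2⟩ := hx
      by_cases hx0 : x = 0
      · right; simp [hx0]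
      left
      have hnx : 0 < ‖x‖ := norm_pos_iff.2 hx0
      have hdn : |⟪cross3 ξ₁ ξ₂, x⟫| / nc ≤ ‖x‖ := by
        rw [div_le_iff₀ hnc]
        have := csb x
        nlinarith
      rw [haL_def] at h1
      rw [hbL_def] at h2
      have hup : ‖x‖ ≤ (1 + r) * (|⟪cross3 ξ₁ ξ₂, x⟫| / nc) := by
        have hnb := nb x
        have hq : 0 ≤ |⟪cross3 ξ₁ ξ₂, x⟫| / nc := by positivity
        have k1 : (nc ^ 2)⁻¹ * n1 * |⟪ξ₁, x⟫|
            ≤ (nc ^ 2)⁻¹ * n1 * ε₁ * (|⟪cross3 ξ₁ ξ₂, x⟫| / nc) := by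
          have := mul_le_mul_of_nonneg_left h1 (by positivity : (0:ℝ) ≤ (nc ^ 2)⁻¹ * n1)
          nlinarith
        have k2 : (nc ^ 2)⁻¹ * n2 * |⟪ξ₂, x⟫|
            ≤ (nc ^ 2)⁻¹ * n2 * ε₂ * (|⟪cross3 ξ₁ ξ₂, x⟫| / nc) := by
          have := mul_le_mul_of_nonneg_left h2 (by positivity : (0:ℝ) ≤ (nc ^ 2)⁻¹ * n2)
          nlinarith
        have k3 : (nc ^ 2)⁻¹ * n1 * ε₁ + (nc ^ 2)⁻¹ * n2 * ε₂ = r := by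
          rw [hr_eq]; field_simp
        nlinarith
      have hlt1 : ‖x‖ < 1 := by
        have hA : (1 + r) * (|⟪cross3 ξ₁ ξ₂, x⟫| / nc) ≤ (1 + r) * (Lp / nc) := by
          apply mul_le_mul_of_nonneg_left _ h1r.le
          gcongr
        have hB : (1 + r) * (Lp / nc) = 1 / (1 + r) := by
          rw [hLp_def]; field_simp
        have hC : 1 / (1 + r) < 1 := by
          rw [div_lt_one h1r]; linarith
        linarith
      refine ⟨⟨hnx, hlt1⟩, ?_, ?_⟩
      · calc |⟪ξ₁, x⟫| ≤ ε₁ * (|⟪cross3 ξ₁ ξ₂, x⟫| / nc) := h1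
          _ ≤ ε₁ * ‖x‖ := mul_le_mul_of_nonneg_left hdn hε₁.le
      · calc |⟪ξ₂, x⟫| ≤ ε₂ * (|⟪cross3 ξ₁ ξ₂, x⟫| / nc) := h2
          _ ≤ ε₂ * ‖x‖ := mul_le_mul_of_nonneg_left hdn hε₂.le
    -- volumes of the comparison bodies
    have hdetval : |(LinearMap.det (Tm ξ₁ ξ₂))⁻¹| = (nc ^ 2)⁻¹ := by
      rw [detTm ξ₁ ξ₂, hNin, abs_of_pos (inv_pos.2 hN)]
    have hvU : volume ((fun x => splitMap (Tm ξ₁ ξ₂ x)) ⁻¹' BU)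
        = ENNReal.ofReal ((nc ^ 2)⁻¹)
          * ENNReal.ofReal (∫ t in Icc (-nc) nc, (2 * aU t) * (2 * bU t)) := by
      have : ((fun x => splitMap (Tm ξ₁ ξ₂ x)) ⁻¹' BU)
          = (Tm ξ₁ ξ₂) ⁻¹' (splitMap ⁻¹' BU) := rfl
      rw [this, Measure.addHaar_preimage_linearMap volume hdet0, hdetval,
        splitMap_mp.measure_preimage (slab_meas nc aU bU hcaU hcbU).nullMeasurableSet,
        slab_vol nc aU bU hcaU hcbU haUn hbUn]
    have hvL : volume ((fun x => splitMap (Tm ξ₁ ξ₂ x)) ⁻¹' BL)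
        = ENNReal.ofReal ((nc ^ 2)⁻¹)
          * ENNReal.ofReal (∫ t in Icc (-Lp) Lp, (2 * aL t) * (2 * bL t)) := by
      have : ((fun x => splitMap (Tm ξ₁ ξ₂ x)) ⁻¹' BL)
          = (Tm ξ₁ ξ₂) ⁻¹' (splitMap ⁻¹' BL) := rfl
      rw [this, Measure.addHaar_preimage_linearMap volume hdet0, hdetval,
        splitMap_mp.measure_preimage (slab_meas Lp aL bL hcaL hcbL).nullMeasurableSet,
        slab_vol Lp aL bL hcaL hcbL haLn hbLn]
    -- the integrals
    set U : ℝ := 4 * ε₁ * ε₂ * (2 * nc / 3 + (2 * r + r ^ 2) * (2 * nc)) with hU_def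
    have hIu : (∫ t in Icc (-nc) nc, (2 * aU t) * (2 * bU t)) ≤ U := by
      have hmono : ∀ t ∈ Icc (-nc) nc,
          (2 * aU t) * (2 * bU t)
            ≤ (4 * ε₁ * ε₂ / nc ^ 2) * t ^ 2 + 4 * ε₁ * ε₂ * (2 * r + r ^ 2) := by
        intro t ht
        rw [haU_def, hbU_def]
        have h1 : |t| ≤ nc := abs_le.2 ⟨ht.1, ht.2⟩
        have h2 : |t| / nc ≤ 1 := (div_le_one hnc).2 h1
        have h3 : (0:ℝ) ≤ |t| := abs_nonneg t
        have h4 : |t| ^ 2 = t ^ 2 := sq_abs t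
        have key : (2 * (ε₁ * (|t| / nc + r))) * (2 * (ε₂ * (|t| / nc + r)))
            = 4 * ε₁ * ε₂ * ((|t| / nc) ^ 2 + 2 * r * (|t| / nc) + r ^ 2) := by ring
        rw [key]
        have h5 : (|t| / nc) ^ 2 = t ^ 2 / nc ^ 2 := by rw [div_pow, h4]
        rw [h5]
        have h6 : 2 * r * (|t| / nc) ≤ 2 * r := by nlinarith
        have h7 : 4 * ε₁ * ε₂ * (2 * r * (|t| / nc)) ≤ 4 * ε₁ * ε₂ * (2 * r) :=
          mul_le_mul_of_nonneg_left h6 (by positivity)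
        have h8 : 4 * ε₁ * ε₂ * (t ^ 2 / nc ^ 2 + 2 * r * (|t| / nc) + r ^ 2)
            = 4 * ε₁ * ε₂ / nc ^ 2 * t ^ 2 + 4 * ε₁ * ε₂ * (2 * r * (|t| / nc))
              + 4 * ε₁ * ε₂ * r ^ 2 := by ring
        have h9 : 4 * ε₁ * ε₂ * (2 * r + r ^ 2)
            = 4 * ε₁ * ε₂ * (2 * r) + 4 * ε₁ * ε₂ * r ^ 2 := by ring
        linarith
      calc (∫ t in Icc (-nc) nc, (2 * aU t) * (2 * bU t))
          ≤ ∫ t in Icc (-nc) nc,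
              ((4 * ε₁ * ε₂ / nc ^ 2) * t ^ 2 + 4 * ε₁ * ε₂ * (2 * r + r ^ 2)) := by
            apply setIntegral_mono_on
            · exact (Continuous.integrableOn_Icc (by fun_prop))
            · exact (Continuous.integrableOn_Icc (by fun_prop))
            · exact measurableSet_Icc
            · exact hmono
        _ = (4 * ε₁ * ε₂ / nc ^ 2) * (2 * nc ^ 3 / 3)
              + 4 * ε₁ * ε₂ * (2 * r + r ^ 2) * (2 * nc) := poly_int _ _ _ hnc.le
        _ = U := by rw [hU_def]; field_simp
    set LoV : ℝ := (4 * ε₁ * ε₂ / nc ^ 2) * (2 * Lp ^ 3 / 3) with hLoV_def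
    have hIl : (∫ t in Icc (-Lp) Lp, (2 * aL t) * (2 * bL t)) = LoV := by
      have hfun : ∀ t : ℝ, (2 * aL t) * (2 * bL t) = (4 * ε₁ * ε₂ / nc ^ 2) * t ^ 2 + 0 := by
        intro t
        rw [haL_def, hbL_def]
        have : (2 * (ε₁ * (|t| / nc))) * (2 * (ε₂ * (|t| / nc)))
            = (4 * ε₁ * ε₂ / nc ^ 2) * (|t| * |t|) := by ring
        rw [this, abs_mul_abs_self]
        ring
      simp_rw [hfun]
      rw [poly_int _ _ _ hLppos.le, hLoV_def]
      ring
    -- combining : bounds for volume S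
    have up1 : volume S ≤ ENNReal.ofReal ((nc ^ 2)⁻¹ * U) := by
      calc volume S ≤ volume ((fun x => splitMap (Tm ξ₁ ξ₂ x)) ⁻¹' BU) :=
            measure_mono incl_up
        _ = ENNReal.ofReal ((nc ^ 2)⁻¹)
            * ENNReal.ofReal (∫ t in Icc (-nc) nc, (2 * aU t) * (2 * bU t)) := hvU
        _ ≤ ENNReal.ofReal ((nc ^ 2)⁻¹) * ENNReal.ofReal U :=
            mul_le_mul_right (ENNReal.ofReal_le_ofReal hIu) _
        _ = ENNReal.ofReal ((nc ^ 2)⁻¹ * U) :=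
            (ENNReal.ofReal_mul (by positivity)).symm
    have lo1 : ENNReal.ofReal ((nc ^ 2)⁻¹ * LoV) ≤ volume S := by
      calc ENNReal.ofReal ((nc ^ 2)⁻¹ * LoV)
          = ENNReal.ofReal ((nc ^ 2)⁻¹) * ENNReal.ofReal LoV :=
            ENNReal.ofReal_mul (by positivity)
        _ = volume ((fun x => splitMap (Tm ξ₁ ξ₂ x)) ⁻¹' BL) := by rw [hvL, hIl]
        _ ≤ volume (S ∪ {0}) := measure_mono incl_lo
        _ ≤ volume S + volume ({0} : Set (EuclideanSpace ℝ (Fin 3))) := measure_union_le _ _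
        _ = volume S := by rw [measure_singleton, add_zero]
    have hfin : volume S ≠ ⊤ := ne_top_of_le_ne_top ENNReal.ofReal_ne_top up1
    have hup_real : (volume S).toReal ≤ (nc ^ 2)⁻¹ * U :=
      ENNReal.toReal_le_of_le_ofReal (by positivity) up1
    have hlo_real : (nc ^ 2)⁻¹ * LoV ≤ (volume S).toReal :=
      (ENNReal.ofReal_le_iff_le_toReal hfin).1 lo1
    -- final assembly
    set V : ℝ := (volume S).toReal with hV_def
    set C : ℝ := (4 * Real.pi)⁻¹ * ((2 * ε₁)⁻¹ * (2 * ε₂)⁻¹ * 3) with hC_def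
    have hCpos : 0 < C := by rw [hC_def]; positivity
    have hF : (4 * Real.pi)⁻¹ *
        (∫ θ : sphere (0 : EuclideanSpace ℝ (Fin 3)) 1,
          ((2 * ε₁)⁻¹ * Set.indicator (Set.Icc (-ε₁) ε₁) (fun _ => (1 : ℝ))
              ⟪ξ₁, (θ : EuclideanSpace ℝ (Fin 3))⟫) *
          ((2 * ε₂)⁻¹ * Set.indicator (Set.Icc (-ε₂) ε₂) (fun _ => (1 : ℝ))
              ⟪ξ₂, (θ : EuclideanSpace ℝ (Fin 3))⟫) ∂sphereMeasure) = C * V := by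
      rw [hint, hσ]
      rw [ENNReal.toReal_mul]
      rw [hC_def, hV_def]
      norm_num
      ring
    rw [hF]
    have hglval : gl (ε₁, ε₂) = C * ((nc ^ 2)⁻¹ * LoV) := by
      rw [hgl_def, hC_def, hLoV_def, hLp_def]
      simp only [← hr_def]
      field_simp
      ring
    have hguval : gu (ε₁, ε₂) = C * ((nc ^ 2)⁻¹ * U) := by
      rw [hgu_def, hC_def, hU_def]
      simp only [← hr_def]
      field_simp
      ring
    constructor
    · rw [hglval]
      exact mul_le_mul_of_nonneg_left hlo_real hCpos.le
    · rw [hguval]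
      exact mul_le_mul_of_nonneg_left hup_real hCpos.le
  refine tendsto_of_tendsto_of_tendsto_of_le_of_le' hgl0 hgu0 ?_ ?_
  · filter_upwards [Filter.prod_mem_prod self_mem_nhdsWithin self_mem_nhdsWithin] with ε hε
    exact (key ε hε.1 hε.2).1
  · filter_upwards [Filter.prod_mem_prod self_mem_nhdsWithin self_mem_nhdsWithin] with ε hε
    exact (key ε hε.1 hε.2).2
end

section
/- The minimum eigenvalue of the operator L̂ (defined by L̂ Σ ↔ π_{V̂⊗V̂}(C(ξ_1,ξ_2) K(ξ_1,ξ_2)) where K(ξ_1,ξ_2) = 1/(2π|ξ_1×ξ_2|)) satisfies λ_min(L̂) ≥ 1/(2π M_w(ω_max)²), where M_w(ω_max) = max_{|ξ|≤ω_max} |ξ| w(|ξ|). -/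
open MeasureTheory
open scoped BigOperators Matrix

lemma cross3_norm_le (a b : EuclideanSpace ℝ (Fin 3)) : ‖cross3 a b‖ ≤ ‖a‖ * ‖b‖ := by
  have ha : ‖a‖ = Real.sqrt (∑ i, ‖a i‖ ^ 2) := EuclideanSpace.norm_eq a
  have hb : ‖b‖ = Real.sqrt (∑ i, ‖b i‖ ^ 2) := EuclideanSpace.norm_eq b
  have hc : ‖cross3 a b‖ = Real.sqrt (∑ i, ‖cross3 a b i‖ ^ 2) := EuclideanSpace.norm_eq _
  rw [ha, hb, hc, ← Real.sqrt_mul (by positivity)]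
  apply Real.sqrt_le_sqrt
  have hcomp : ∀ i, cross3 a b i = (crossProduct (a : Fin 3 → ℝ) b) i := fun i => rfl
  simp only [hcomp, cross_apply, Fin.sum_univ_three, Real.norm_eq_abs, sq_abs]
  simp [Matrix.cons_val_zero, Matrix.cons_val_one]
  nlinarith [sq_nonneg (a 0 * b 0 + a 1 * b 1 + a 2 * b 2), sq_nonneg (a 0 * b 1 - a 1 * b 0)]

lemma cross3_slice_null (x : EuclideanSpace ℝ (Fin 3)) (hx : x ≠ 0) :
    volume {y : EuclideanSpace ℝ (Fin 3) | cross3 x y = 0} = 0 := by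
  have hsub : {y : EuclideanSpace ℝ (Fin 3) | cross3 x y = 0} ⊆
      (Submodule.span ℝ {x} : Submodule ℝ (EuclideanSpace ℝ (Fin 3))) := by
    intro y hy
    simp only [Set.mem_setOf_eq] at hy
    have hcz : crossProduct (x : Fin 3 → ℝ) y = 0 := by
      have := congrArg (EuclideanSpace.equiv (Fin 3) ℝ) hy
      simp [cross3] at this
      exact this
    have hdep : ¬ LinearIndependent ℝ ![(x : Fin 3 → ℝ), (y : Fin 3 → ℝ)] := by
      rw [← crossProduct_ne_zero_iff_linearIndependent]
      simpa using hcz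
    rw [LinearIndependent.pair_iff] at hdep
    push_neg at hdep
    obtain ⟨s, t, hst, hne⟩ := hdep
    by_cases ht : t = 0
    · exfalso
      subst ht
      simp only [zero_smul, add_zero, smul_eq_zero] at hst
      rcases hst with hs | hxz
      · exact hne hs rfl
      · exact hx (WithLp.ofLp_injective 2 hxz)
    · rw [SetLike.mem_coe, Submodule.mem_span_singleton]
      refine ⟨-s / t, ?_⟩
      ext i
      have hi : s * x i + t * y i = 0 := by
        have := congrFun hst i
        simpa [PiLp.add_apply, PiLp.smul_apply, smul_eq_mul] using this
      show (-s / t) * x i = y i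
      field_simp
      linarith
  refine measure_mono_null hsub ?_
  exact Measure.addHaar_submodule volume _ (by
    intro htop
    have h1 : Module.finrank ℝ (Submodule.span ℝ ({x} : Set (EuclideanSpace ℝ (Fin 3)))) = 1 :=
      finrank_span_singleton hx
    rw [htop, finrank_top, finrank_euclideanSpace_fin] at h1
    omega)

lemma cross3_cont : Continuous (fun ξp : EuclideanSpace ℝ (Fin 3) × EuclideanSpace ℝ (Fin 3) =>
    cross3 ξp.1 ξp.2) := by
  apply (EuclideanSpace.equiv (Fin 3) ℝ).symm.continuous.comp
  have : Continuous (fun ξp : EuclideanSpace ℝ (Fin 3) × EuclideanSpace ℝ (Fin 3) =>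
      (fun i => crossProduct (ξp.1 : Fin 3 → ℝ) ξp.2 i : Fin 3 → ℝ)) := by
    apply continuous_pi
    intro i
    have c1 : ∀ j : Fin 3, Continuous
        (fun ξp : EuclideanSpace ℝ (Fin 3) × EuclideanSpace ℝ (Fin 3) => ξp.1 j) :=
      fun j => (EuclideanSpace.proj (𝕜 := ℝ) j).continuous.comp continuous_fst
    have c2 : ∀ j : Fin 3, Continuous
        (fun ξp : EuclideanSpace ℝ (Fin 3) × EuclideanSpace ℝ (Fin 3) => ξp.2 j) :=
      fun j => (EuclideanSpace.proj (𝕜 := ℝ) j).continuous.comp continuous_snd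
    fin_cases i <;>
    · simp only [cross_apply, Matrix.cons_val_zero, Matrix.cons_val_one, Matrix.head_cons,
        Matrix.cons_val_two, Matrix.tail_cons]
      exact (((c1 _).mul (c2 _)).sub ((c1 _).mul (c2 _)))
  exact this

lemma cross3_prod_null :
    volume {ξp : EuclideanSpace ℝ (Fin 3) × EuclideanSpace ℝ (Fin 3) |
      cross3 ξp.1 ξp.2 = 0} = 0 := by
  have hmeas : MeasurableSet {ξp : EuclideanSpace ℝ (Fin 3) × EuclideanSpace ℝ (Fin 3) |
      cross3 ξp.1 ξp.2 = 0} :=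
    (isClosed_singleton.preimage cross3_cont).measurableSet
  rw [Measure.volume_eq_prod, Measure.measure_prod_null hmeas]
  filter_upwards [compl_mem_ae_iff.mpr (measure_singleton (0 : EuclideanSpace ℝ (Fin 3)))]
    with x hx
  simp only [Set.mem_compl_iff, Set.mem_singleton_iff] at hx
  exact cross3_slice_null x hx

lemma expand_aux {p : ℕ} (h : Fin p → (EuclideanSpace ℝ (Fin 3)) → ℂ)
    (S : Matrix (Fin p) (Fin p) ℂ) (κ : ℝ) (x y : EuclideanSpace ℝ (Fin 3)) :
    ((‖∑ i, ∑ j, S i j * h i x * star (h j y)‖ ^ 2 * κ : ℝ) : ℂ) =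
      ∑ i', ∑ j', ∑ i, ∑ j, S i j * star (S i' j') *
        (h i x * star (h i' x) * star (h j y) * h j' y * (κ : ℂ)) := by
  have hconj : (starRingEnd ℂ) (∑ i', ∑ j', S i' j' * h i' x * star (h j' y)) =
      ∑ i', ∑ j', star (S i' j') * star (h i' x) * h j' y := by
    simp [map_sum, map_mul, Complex.conj_conj, Complex.star_def]
  rw [Complex.ofReal_mul, Complex.ofReal_pow, ← Complex.mul_conj', hconj]
  simp only [Finset.sum_mul, Finset.mul_sum]
  refine Finset.sum_congr rfl fun i _ => Finset.sum_congr rfl fun j _ =>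
    Finset.sum_congr rfl fun i' _ => Finset.sum_congr rfl fun j' _ => ?_
  ring

/-- The minimum eigenvalue of the operator `L̂`, defined via the quadratic form
`⟨L̂ Σ, Σ⟩ = ∫∫ |C(ξ₁,ξ₂)|² K(ξ₁,ξ₂) dξ₁ dξ₂` with `K(ξ₁,ξ₂) = 1/(2π|ξ₁×ξ₂|)`, satisfies
`λ_min(L̂) ≥ 1/(2π M_w(ω_max)²)`: the Rayleigh quotient of any `Σ` is at least
`1/(2π M_w(ω_max)²)`. -/
theorem Lhat_min_eigenvalue
    (phat : ℕ) (ωmax M : ℝ) (w : ℝ → ℝ)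
    (h : Fin phat → (EuclideanSpace ℝ (Fin 3) → ℂ))
    (hcont : ∀ i, Continuous (h i))
    (hsupp : ∀ i ξ, ωmax < ‖ξ‖ → h i ξ = 0)
    (hw : ∀ r : ℝ, 0 ≤ r → 0 ≤ w r)
    (hM : 0 < M)
    (hMmax : ∀ ξ : EuclideanSpace ℝ (Fin 3), ‖ξ‖ ≤ ωmax → ‖ξ‖ * w ‖ξ‖ ≤ M)
    (horth : ∀ i j, (∫ ξ : EuclideanSpace ℝ (Fin 3),
        h i ξ * star (h j ξ) * (w ‖ξ‖ : ℂ)) = if i = j then 1 else 0)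
    (hKint : ∀ i₁ j₁ i₂ j₂, Integrable
      (fun ξp : EuclideanSpace ℝ (Fin 3) × EuclideanSpace ℝ (Fin 3) =>
        h i₁ ξp.1 * star (h j₁ ξp.1) * star (h i₂ ξp.2) * h j₂ ξp.2 *
          (((2 * Real.pi * ‖cross3 ξp.1 ξp.2‖)⁻¹ : ℝ) : ℂ)))
    (hwint : ∀ i₁ j₁ i₂ j₂, Integrable
      (fun ξp : EuclideanSpace ℝ (Fin 3) × EuclideanSpace ℝ (Fin 3) =>
        h i₁ ξp.1 * star (h j₁ ξp.1) * star (h i₂ ξp.2) * h j₂ ξp.2 *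
          ((w ‖ξp.1‖ * w ‖ξp.2‖ : ℝ) : ℂ)))
    (Lhat : Matrix (Fin phat) (Fin phat) ℂ → Matrix (Fin phat) (Fin phat) ℂ)
    (hquad : ∀ S : Matrix (Fin phat) (Fin phat) ℂ,
      Matrix.trace (Sᴴ * Lhat S) =
        ((∫ ξp : EuclideanSpace ℝ (Fin 3) × EuclideanSpace ℝ (Fin 3),
            ‖∑ i, ∑ j, S i j * h i ξp.1 * star (h j ξp.2)‖ ^ 2 *
              (2 * Real.pi * ‖cross3 ξp.1 ξp.2‖)⁻¹ : ℝ) : ℂ)) :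
    ∀ S : Matrix (Fin phat) (Fin phat) ℂ,
      (2 * Real.pi * M ^ 2)⁻¹ * (∑ i, ∑ j, ‖S i j‖ ^ 2) ≤
        (Matrix.trace (Sᴴ * Lhat S)).re := by
  intro S
  have hπ : (0 : ℝ) < Real.pi := Real.pi_pos
  -- Complex-valued integrable versions
  have hIK : Integrable (fun ξp : EuclideanSpace ℝ (Fin 3) × EuclideanSpace ℝ (Fin 3) =>
      ((‖∑ i, ∑ j, S i j * h i ξp.1 * star (h j ξp.2)‖ ^ 2 *
        (2 * Real.pi * ‖cross3 ξp.1 ξp.2‖)⁻¹ : ℝ) : ℂ)) := by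
    have he : (fun ξp : EuclideanSpace ℝ (Fin 3) × EuclideanSpace ℝ (Fin 3) =>
        ((‖∑ i, ∑ j, S i j * h i ξp.1 * star (h j ξp.2)‖ ^ 2 *
          (2 * Real.pi * ‖cross3 ξp.1 ξp.2‖)⁻¹ : ℝ) : ℂ)) =
        fun ξp => ∑ i', ∑ j', ∑ i, ∑ j, S i j * star (S i' j') *
          (h i ξp.1 * star (h i' ξp.1) * star (h j ξp.2) * h j' ξp.2 *
            (((2 * Real.pi * ‖cross3 ξp.1 ξp.2‖)⁻¹ : ℝ) : ℂ)) :=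
      funext fun ξp => expand_aux h S _ ξp.1 ξp.2
    rw [he]
    exact integrable_finset_sum _ fun i' _ => integrable_finset_sum _ fun j' _ =>
      integrable_finset_sum _ fun i _ => integrable_finset_sum _ fun j _ =>
        (hKint i i' j j').const_mul _
  have hIW : Integrable (fun ξp : EuclideanSpace ℝ (Fin 3) × EuclideanSpace ℝ (Fin 3) =>
      ((‖∑ i, ∑ j, S i j * h i ξp.1 * star (h j ξp.2)‖ ^ 2 *
        (w ‖ξp.1‖ * w ‖ξp.2‖) : ℝ) : ℂ)) := by
    have he : (fun ξp : EuclideanSpace ℝ (Fin 3) × EuclideanSpace ℝ (Fin 3) =>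
        ((‖∑ i, ∑ j, S i j * h i ξp.1 * star (h j ξp.2)‖ ^ 2 *
          (w ‖ξp.1‖ * w ‖ξp.2‖) : ℝ) : ℂ)) =
        fun ξp => ∑ i', ∑ j', ∑ i, ∑ j, S i j * star (S i' j') *
          (h i ξp.1 * star (h i' ξp.1) * star (h j ξp.2) * h j' ξp.2 *
            ((w ‖ξp.1‖ * w ‖ξp.2‖ : ℝ) : ℂ)) :=
      funext fun ξp => expand_aux h S _ ξp.1 ξp.2
    rw [he]
    exact integrable_finset_sum _ fun i' _ => integrable_finset_sum _ fun j' _ =>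
      integrable_finset_sum _ fun i _ => integrable_finset_sum _ fun j _ =>
        (hwint i i' j j').const_mul _
  -- Real-valued integrability
  have hIKr : Integrable (fun ξp : EuclideanSpace ℝ (Fin 3) × EuclideanSpace ℝ (Fin 3) =>
      ‖∑ i, ∑ j, S i j * h i ξp.1 * star (h j ξp.2)‖ ^ 2 *
        (2 * Real.pi * ‖cross3 ξp.1 ξp.2‖)⁻¹) := by
    refine hIK.re.congr (Filter.Eventually.of_forall fun ξp => ?_)
    simp only [RCLike.re_to_complex, Complex.ofReal_re]
  have hIWr : Integrable (fun ξp : EuclideanSpace ℝ (Fin 3) × EuclideanSpace ℝ (Fin 3) =>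
      ‖∑ i, ∑ j, S i j * h i ξp.1 * star (h j ξp.2)‖ ^ 2 * (w ‖ξp.1‖ * w ‖ξp.2‖)) := by
    refine hIW.re.congr (Filter.Eventually.of_forall fun ξp => ?_)
    simp only [RCLike.re_to_complex, Complex.ofReal_re]
  -- Value of each orthogonality integral
  have hterm : ∀ i i' j j', (∫ ξp : EuclideanSpace ℝ (Fin 3) × EuclideanSpace ℝ (Fin 3),
      h i ξp.1 * star (h i' ξp.1) * star (h j ξp.2) * h j' ξp.2 *
        ((w ‖ξp.1‖ * w ‖ξp.2‖ : ℝ) : ℂ)) =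
      (if i = i' then (1 : ℂ) else 0) * (if j = j' then (1 : ℂ) else 0) := by
    intro i i' j j'
    have hfg : (fun ξp : EuclideanSpace ℝ (Fin 3) × EuclideanSpace ℝ (Fin 3) =>
        h i ξp.1 * star (h i' ξp.1) * star (h j ξp.2) * h j' ξp.2 *
          ((w ‖ξp.1‖ * w ‖ξp.2‖ : ℝ) : ℂ)) =
        fun ξp => (h i ξp.1 * star (h i' ξp.1) * ((w ‖ξp.1‖ : ℝ) : ℂ)) *
          (star (h j ξp.2) * h j' ξp.2 * ((w ‖ξp.2‖ : ℝ) : ℂ)) := by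
      funext ξp; push_cast; ring
    have hpm := MeasureTheory.integral_prod_mul (μ := (volume : Measure (EuclideanSpace ℝ (Fin 3))))
      (ν := (volume : Measure (EuclideanSpace ℝ (Fin 3))))
      (f := fun ξ : EuclideanSpace ℝ (Fin 3) => h i ξ * star (h i' ξ) * ((w ‖ξ‖ : ℝ) : ℂ))
      (g := fun ξ : EuclideanSpace ℝ (Fin 3) => star (h j ξ) * h j' ξ * ((w ‖ξ‖ : ℝ) : ℂ))
    rw [hfg, Measure.volume_eq_prod, hpm]
    have h2 : (fun ξ : EuclideanSpace ℝ (Fin 3) => star (h j ξ) * h j' ξ * ((w ‖ξ‖ : ℝ) : ℂ)) =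
        fun ξ => (starRingEnd ℂ) (h j ξ * star (h j' ξ) * ((w ‖ξ‖ : ℝ) : ℂ)) := by
      funext ξ
      simp only [map_mul, Complex.conj_conj, Complex.conj_ofReal, Complex.star_def]
      try ring
    rw [h2, integral_conj, horth i i', horth j j']
    by_cases hij : i = i' <;> by_cases hj : j = j' <;> simp [hij, hj, eq_comm]
  -- The value of the w-weighted integral
  have hWval : (∫ ξp : EuclideanSpace ℝ (Fin 3) × EuclideanSpace ℝ (Fin 3),
      ‖∑ i, ∑ j, S i j * h i ξp.1 * star (h j ξp.2)‖ ^ 2 * (w ‖ξp.1‖ * w ‖ξp.2‖)) =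
      ∑ i, ∑ j, ‖S i j‖ ^ 2 := by
    have hcast : (∫ ξp : EuclideanSpace ℝ (Fin 3) × EuclideanSpace ℝ (Fin 3),
        ((‖∑ i, ∑ j, S i j * h i ξp.1 * star (h j ξp.2)‖ ^ 2 *
          (w ‖ξp.1‖ * w ‖ξp.2‖) : ℝ) : ℂ)) =
        ((∫ ξp : EuclideanSpace ℝ (Fin 3) × EuclideanSpace ℝ (Fin 3),
          ‖∑ i, ∑ j, S i j * h i ξp.1 * star (h j ξp.2)‖ ^ 2 *
            (w ‖ξp.1‖ * w ‖ξp.2‖) : ℝ) : ℂ) := integral_ofReal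
    rw [← Complex.ofReal_inj, ← hcast]
    have he : (fun ξp : EuclideanSpace ℝ (Fin 3) × EuclideanSpace ℝ (Fin 3) =>
        ((‖∑ i, ∑ j, S i j * h i ξp.1 * star (h j ξp.2)‖ ^ 2 *
          (w ‖ξp.1‖ * w ‖ξp.2‖) : ℝ) : ℂ)) =
        fun ξp => ∑ i', ∑ j', ∑ i, ∑ j, S i j * star (S i' j') *
          (h i ξp.1 * star (h i' ξp.1) * star (h j ξp.2) * h j' ξp.2 *
            ((w ‖ξp.1‖ * w ‖ξp.2‖ : ℝ) : ℂ)) :=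
      funext fun ξp => expand_aux h S _ ξp.1 ξp.2
    show (∫ ξp : EuclideanSpace ℝ (Fin 3) × EuclideanSpace ℝ (Fin 3),
        ((‖∑ i, ∑ j, S i j * h i ξp.1 * star (h j ξp.2)‖ ^ 2 *
          (w ‖ξp.1‖ * w ‖ξp.2‖) : ℝ) : ℂ)) = _
    rw [he]
    rw [integral_finset_sum _ (fun i' _ => integrable_finset_sum _ fun j' _ =>
      integrable_finset_sum _ fun i _ => integrable_finset_sum _ fun j _ =>
        (hwint i i' j j').const_mul _)]
    have hstep : ∀ i' : Fin phat, (∫ ξp : EuclideanSpace ℝ (Fin 3) × EuclideanSpace ℝ (Fin 3),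
        ∑ j', ∑ i, ∑ j, S i j * star (S i' j') *
          (h i ξp.1 * star (h i' ξp.1) * star (h j ξp.2) * h j' ξp.2 *
            ((w ‖ξp.1‖ * w ‖ξp.2‖ : ℝ) : ℂ))) =
        ∑ j', ∑ i, ∑ j, S i j * star (S i' j') *
          ((if i = i' then (1 : ℂ) else 0) * (if j = j' then (1 : ℂ) else 0)) := by
      intro i'
      rw [integral_finset_sum _ (fun j' _ => integrable_finset_sum _ fun i _ =>
        integrable_finset_sum _ fun j _ => (hwint i i' j j').const_mul _)]
      refine Finset.sum_congr rfl fun j' _ => ?_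
      rw [integral_finset_sum _ (fun i _ => integrable_finset_sum _ fun j _ =>
        (hwint i i' j j').const_mul _)]
      refine Finset.sum_congr rfl fun i _ => ?_
      rw [integral_finset_sum _ (fun j _ => (hwint i i' j j').const_mul _)]
      refine Finset.sum_congr rfl fun j _ => ?_
      rw [integral_const_mul, hterm i i' j j']
    rw [Finset.sum_congr rfl fun i' _ => hstep i']
    push_cast
    simp only [mul_ite, mul_one, mul_zero, ite_mul, zero_mul, one_mul,
      Finset.sum_ite_eq', Finset.mem_univ, if_true, Finset.sum_ite_eq, Finset.sum_ite_irrel,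
      Finset.sum_const_zero]
    refine Finset.sum_congr rfl fun i _ => Finset.sum_congr rfl fun j _ => ?_
    rw [← Complex.mul_conj']
    rfl
  -- a.e. pointwise bound
  have hae : ∀ᵐ ξp : EuclideanSpace ℝ (Fin 3) × EuclideanSpace ℝ (Fin 3),
      (2 * Real.pi * M ^ 2)⁻¹ *
        (‖∑ i, ∑ j, S i j * h i ξp.1 * star (h j ξp.2)‖ ^ 2 * (w ‖ξp.1‖ * w ‖ξp.2‖)) ≤
      ‖∑ i, ∑ j, S i j * h i ξp.1 * star (h j ξp.2)‖ ^ 2 *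
        (2 * Real.pi * ‖cross3 ξp.1 ξp.2‖)⁻¹ := by
    filter_upwards [compl_mem_ae_iff.mpr cross3_prod_null] with ξp hc
    simp only [Set.mem_compl_iff, Set.mem_setOf_eq] at hc
    by_cases hC : (∑ i, ∑ j, S i j * h i ξp.1 * star (h j ξp.2)) = 0
    · rw [hC]
      simp
    · obtain ⟨i, -, hi⟩ := Finset.exists_ne_zero_of_sum_ne_zero hC
      obtain ⟨j, -, hj⟩ := Finset.exists_ne_zero_of_sum_ne_zero hi
      have hx1 : h i ξp.1 ≠ 0 := fun h0 => hj (by simp [h0])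
      have hx2 : h j ξp.2 ≠ 0 := fun h0 => hj (by simp [h0])
      have hn1 : ‖ξp.1‖ ≤ ωmax := by
        by_contra hgt; exact hx1 (hsupp i _ (lt_of_not_ge hgt))
      have hn2 : ‖ξp.2‖ ≤ ωmax := by
        by_contra hgt; exact hx2 (hsupp j _ (lt_of_not_ge hgt))
      have hw1 : 0 ≤ w ‖ξp.1‖ := hw _ (norm_nonneg _)
      have hw2 : 0 ≤ w ‖ξp.2‖ := hw _ (norm_nonneg _)
      have hcp : 0 < ‖cross3 ξp.1 ξp.2‖ := norm_pos_iff.mpr hc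
      have hkey : w ‖ξp.1‖ * w ‖ξp.2‖ * ‖cross3 ξp.1 ξp.2‖ ≤ M ^ 2 := by
        have h1 := cross3_norm_le ξp.1 ξp.2
        have h2 := hMmax ξp.1 hn1
        have h3 := hMmax ξp.2 hn2
        nlinarith [norm_nonneg ξp.1, norm_nonneg ξp.2, mul_nonneg hw1 hw2,
          mul_nonneg (norm_nonneg ξp.1) hw1, mul_nonneg (norm_nonneg ξp.2) hw2]
      have hfrac : (2 * Real.pi * M ^ 2)⁻¹ * (w ‖ξp.1‖ * w ‖ξp.2‖) ≤
          (2 * Real.pi * ‖cross3 ξp.1 ξp.2‖)⁻¹ := by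
        rw [mul_comm, ← div_eq_mul_inv, inv_eq_one_div,
          div_le_div_iff₀ (by positivity) (by positivity)]
        nlinarith [hkey, hπ]
      calc (2 * Real.pi * M ^ 2)⁻¹ *
            (‖∑ i, ∑ j, S i j * h i ξp.1 * star (h j ξp.2)‖ ^ 2 * (w ‖ξp.1‖ * w ‖ξp.2‖))
          = ‖∑ i, ∑ j, S i j * h i ξp.1 * star (h j ξp.2)‖ ^ 2 *
            ((2 * Real.pi * M ^ 2)⁻¹ * (w ‖ξp.1‖ * w ‖ξp.2‖)) := by ring
        _ ≤ ‖∑ i, ∑ j, S i j * h i ξp.1 * star (h j ξp.2)‖ ^ 2 *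
            (2 * Real.pi * ‖cross3 ξp.1 ξp.2‖)⁻¹ :=
          mul_le_mul_of_nonneg_left hfrac (by positivity)
  -- conclude
  rw [hquad S, Complex.ofReal_re, ← hWval, ← integral_const_mul]
  exact integral_mono_ae (hIWr.const_mul _) hIKr hae
end
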